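/- Under the Schatz-type smallness condition on the adjoint approximation quantity η (namely β C_b² η² ≤ α/2, ensuring the quasi-optimal error bound for any Galerkin solution), the finite-dimensional Galerkin problem a(u_h, v_h) = ℓ(v_h) for all v_h ∈ V_h has a unique solution u_h ∈ V_h for every antilinear continuous functional ℓ, provided the continuous problem a(u,v) = ℓ(v) for all v ∈ X is uniquely solvable. -/

import Mathlib

open ComplexConjugate

/-- Fredholm alternative: if `K` has finite-dimensional range and `id - K` is injective,
then `id - K` is surjective. -/
lemma schatz_fredholm_aux {E : Type*} [AddCommGroup E] [Module ℂ E]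
    (K : E →ₗ[ℂ] E) (hK : FiniteDimensional ℂ (LinearMap.range K))
    (hinj : Function.Injective (LinearMap.id (R := ℂ) (M := E) - K)) :
    Function.Surjective (LinearMap.id (R := ℂ) (M := E) - K) := by
  set U := LinearMap.range K with hU
  have hinv : ∀ x ∈ U, (LinearMap.id (R := ℂ) (M := E) - K) x ∈ U := by
    intro x hx
    simp only [LinearMap.sub_apply, LinearMap.id_apply]
    exact U.sub_mem hx (LinearMap.mem_range_self K x)
  set φ := (LinearMap.id (R := ℂ) (M := E) - K).restrict hinv with hφ
  have hφinj : Function.Injective φ := by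
    intro x y hxy
    have : (LinearMap.id (R := ℂ) (M := E) - K) x.1 = (LinearMap.id (R := ℂ) (M := E) - K) y.1 := by
      have := congrArg Subtype.val hxy
      simpa [hφ, LinearMap.restrict_apply] using this
    exact Subtype.ext (hinj this)
  haveI := hK
  have hφsurj : Function.Surjective φ := (LinearMap.injective_iff_surjective).1 hφinj
  intro y
  obtain ⟨z, hz⟩ := hφsurj ⟨K y, LinearMap.mem_range_self K y⟩
  have hz' : z.1 - K z.1 = K y := by
    have := congrArg Subtype.val hz
    simpa [hφ, LinearMap.restrict_apply] using this
  refine ⟨y + z.1, ?_⟩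
  simp only [LinearMap.sub_apply, LinearMap.id_apply, map_add]
  rw [hz']
  abel

/-- A coercive bounded operator on a complex Hilbert space is bijective. -/
lemma schatz_coercive_bij {E : Type*} [NormedAddCommGroup E] [InnerProductSpace ℂ E]
    [CompleteSpace E] (T : E →L[ℂ] E) {c : ℝ} (hc : 0 < c)
    (h : ∀ x : E, c * ‖x‖ ^ 2 ≤ (inner ℂ (T x) x : ℂ).re) :
    Function.Bijective T := by
  have hlow : ∀ x : E, c * ‖x‖ ≤ ‖T x‖ := by
    intro x
    rcases eq_or_ne x 0 with rfl | hx
    · simp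
    · have h1 : c * ‖x‖ ^ 2 ≤ ‖T x‖ * ‖x‖ := by
        refine (h x).trans ?_
        calc (inner ℂ (T x) x : ℂ).re ≤ ‖(inner ℂ (T x) x : ℂ)‖ := Complex.re_le_norm _
        _ ≤ ‖T x‖ * ‖x‖ := norm_inner_le_norm _ _
      have hx' : 0 < ‖x‖ := norm_pos_iff.2 hx
      nlinarith [sq_nonneg ‖x‖]
  have hbound : ∀ x : E, ‖x‖ ≤ c⁻¹ * ‖T x‖ := by
    intro x
    rw [inv_mul_eq_div, le_div_iff₀ hc]
    calc ‖x‖ * c = c * ‖x‖ := mul_comm _ _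
    _ ≤ ‖T x‖ := hlow x
  have hanti := T.antilipschitz_of_bound (K := ⟨c⁻¹, by positivity⟩)
    (fun x => by exact hbound x)
  have hinj : Function.Injective T := hanti.injective
  have hclosed : IsClosed (Set.range T) := hanti.isClosed_range T.uniformContinuous
  have hclosed' : IsClosed ((LinearMap.range (T : E →ₗ[ℂ] E) : Submodule ℂ E) : Set E) := by
    simpa [LinearMap.coe_range] using hclosed
  haveI : CompleteSpace (LinearMap.range (T : E →ₗ[ℂ] E) : Submodule ℂ E) := hclosed'.completeSpace_coe
  have horth : (LinearMap.range (T : E →ₗ[ℂ] E) : Submodule ℂ E)ᗮ = ⊥ := by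
    rw [Submodule.eq_bot_iff]
    intro z hz
    have hz0 : (inner ℂ (T z) z : ℂ) = 0 :=
      (Submodule.mem_orthogonal _ z).1 hz (T z) (LinearMap.mem_range_self (T : E →ₗ[ℂ] E) z)
    have h2 := h z
    rw [hz0] at h2
    simp only [Complex.zero_re] at h2
    have h3 : ‖z‖ ^ 2 ≤ 0 := by nlinarith
    have h4 : ‖z‖ ^ 2 = 0 := le_antisymm h3 (sq_nonneg _)
    have h5 : ‖z‖ = 0 := pow_eq_zero_iff (n := 2) (by norm_num) |>.1 h4
    simpa [norm_eq_zero] using h5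
  have htop : LinearMap.range (T : E →ₗ[ℂ] E) = ⊤ := (Submodule.orthogonal_eq_bot_iff).1 horth
  exact ⟨hinj, LinearMap.range_eq_top.1 htop⟩

set_option maxHeartbeats 2000000 in
/-- unique solvability of the finite-dimensional Galerkin problem under
the Schatz-type smallness condition.  Setting as in the abstract Schatz argument:
`X ⊂ H` complex Hilbert spaces with continuous embedding `J`, `a` a continuous
sesquilinear form with Gårding inequality (constants `α`, `β`), all adjoint problems
with right-hand sides `f ∈ H` uniquely solvable with solution `w f`, and the adjoint
approximation quantity `η` satisfying `β Cb² η² ≤ α/2`.  If the continuous problem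
`a(u,v) = ℓ(v)` is uniquely solvable for every antilinear continuous functional `ℓ`,
then so is the discrete problem `a(u_h, v_h) = ℓ(v_h)` for all `v_h ∈ Vh`. -/
theorem stmt_3 {X H : Type*}
    [NormedAddCommGroup X] [InnerProductSpace ℂ X] [CompleteSpace X]
    [NormedAddCommGroup H] [InnerProductSpace ℂ H] [CompleteSpace H]
    (J : X →L[ℂ] H)
    (a : X → X → ℂ) (Cb α β : ℝ) (hCb : 0 < Cb) (hα : 0 < α) (hβ : 0 ≤ β)
    (hadd : ∀ w w' v : X, a (w + w') v = a w v + a w' v)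
    (hsmul : ∀ (c : ℂ) (w v : X), a (c • w) v = c * a w v)
    (hbound : ∀ w v : X, ‖a w v‖ ≤ Cb * ‖w‖ * ‖v‖)
    (hgarding : ∀ v : X, α * ‖v‖ ^ 2 - β * ‖J v‖ ^ 2 ≤ (a v v).re)
    (Vh : Submodule ℂ X) [FiniteDimensional ℂ Vh]
    (w : H → X)
    (hadjoint : ∀ (f : H) (v : X), conj (a v (w f)) = inner ℂ (J v) f)
    (η : ℝ) (hη : 0 ≤ η)
    (happrox : ∀ f : H, ∀ ε > 0, ∃ vh ∈ Vh, ‖w f - vh‖ ≤ (η + ε) * ‖f‖)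
    (hsmall : β * Cb ^ 2 * η ^ 2 ≤ α / 2)
    (hcont : ∀ ℓ : X →SL[starRingEnd ℂ] ℂ, ∃! u : X, ∀ v : X, a u v = ℓ v) :
    ∀ ℓ : X →SL[starRingEnd ℂ] ℂ,
      ∃! uh : Vh, ∀ vh : Vh, a (uh : X) (vh : X) = ℓ (vh : X) := by
  classical
  -- basic algebra of the form `a` in its first (linear) slot
  have hzero : ∀ v : X, a 0 v = 0 := fun v => by
    have := hsmul 0 0 v
    simpa using this
  have hsub : ∀ x y v : X, a (x - y) v = a x v - a y v := by
    intro x y v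
    have h1 := hadd (x - y) y v
    rw [sub_add_cancel] at h1
    linear_combination -h1
  -- unique solvability of the problems with right-hand side `v ↦ ⟪v, g⟫`
  have hUex : ∀ g : X, ∃! u : X, ∀ v : X, a u v = (inner ℂ v g : ℂ) := by
    intro g
    have := hcont (LinearMap.mkContinuous
      { toFun := fun v => (inner ℂ v g : ℂ)
        map_add' := fun x y => inner_add_left x y g
        map_smul' := fun c x => by simpa [smul_eq_mul, mul_comm] using inner_smul_left x g c }
      ‖g‖ (fun v => by rw [mul_comm]; exact norm_inner_le_norm v g))
    simpa using this
  choose U hU1 using fun g => (hUex g).exists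
  have hUuniq : ∀ (g x : X), (∀ v, a x v = (inner ℂ v g : ℂ)) → x = U g := fun g x hx =>
    ((hUex g).unique hx (hU1 g))
  -- linearity of the solution operator U
  have hUadd : ∀ g g', U (g + g') = U g + U g' := by
    intro g g'
    refine (hUuniq _ _ ?_).symm
    intro v
    rw [hadd, hU1, hU1, inner_add_right]
  have hUsmul : ∀ (c : ℂ) g, U (c • g) = c • U g := by
    intro c g
    refine (hUuniq _ _ ?_).symm
    intro v
    rw [hsmul, hU1, inner_smul_right]
  -- U is bounded below
  have hUlow : ∀ g, ‖g‖ ≤ Cb * ‖U g‖ := by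
    intro g
    rcases eq_or_ne g 0 with rfl | hg
    · simpa using by positivity
    · have h1 := hU1 g g
      have h2 : ‖(inner ℂ g g : ℂ)‖ = ‖g‖ * ‖g‖ := by
        rw [inner_self_eq_norm_sq_to_K]
        rw [norm_pow]
        simp [sq]
      have h3 : ‖g‖ * ‖g‖ ≤ Cb * ‖U g‖ * ‖g‖ := by
        rw [← h2, ← h1]
        exact hbound (U g) g
      have hg' : 0 < ‖g‖ := norm_pos_iff.2 hg
      exact le_of_mul_le_mul_right h3 hg'
  -- the linear map underlying U
  let ULM : X →ₗ[ℂ] X :=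
    { toFun := U
      map_add' := hUadd
      map_smul' := fun c g => by simpa using hUsmul c g }
  -- for fixed v, z ↦ a z v is a continuous linear functional
  let Av : X → (X →L[ℂ] ℂ) := fun v => LinearMap.mkContinuous
    { toFun := fun z => a z v
      map_add' := fun z z' => hadd z z' v
      map_smul' := fun c z => by simpa using hsmul c z v }
    (Cb * ‖v‖) (fun z => by
      have := hbound z v
      calc ‖a z v‖ ≤ Cb * ‖z‖ * ‖v‖ := this
      _ = Cb * ‖v‖ * ‖z‖ := by ring)
  have hAv : ∀ (v z : X), Av v z = a z v := fun v z => rfl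
  -- continuity of U via the closed graph theorem
  have hUcont : Continuous U := by
    have : Continuous ULM := by
      apply ULM.continuous_of_seq_closed_graph
      intro s x y hs hUs
      have h1 : ∀ v : X, a y v = (inner ℂ v x : ℂ) := by
        intro v
        have t1 : Filter.Tendsto (fun n => Av v (U (s n))) Filter.atTop (nhds (Av v y)) :=
          ((Av v).continuous.tendsto y).comp hUs
        have t2 : Filter.Tendsto (fun n => Av v (U (s n))) Filter.atTop
            (nhds (inner ℂ v x : ℂ)) := by
          have heq : (fun n => Av v (U (s n))) = fun n => (inner ℂ v (s n) : ℂ) := by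
            funext n
            rw [hAv, hU1]
          rw [heq]
          exact Filter.Tendsto.inner tendsto_const_nhds hs
        have := tendsto_nhds_unique t1 t2
        rwa [hAv] at this
      exact hUuniq x y h1
    exact this
  let UCL : X →L[ℂ] X := ⟨ULM, hUcont⟩
  have hanti : AntilipschitzWith ⟨Cb, hCb.le⟩ UCL := by
    apply UCL.antilipschitz_of_bound
    intro x
    exact hUlow x
  set M₀ : Submodule ℂ X := LinearMap.range ULM with hM₀def
  have hMclosed : IsClosed (M₀ : Set X) := by
    have h1 : IsClosed (Set.range UCL) := hanti.isClosed_range UCL.uniformContinuous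
    have h2 : Set.range (UCL : X → X) = (M₀ : Set X) := by
      rw [hM₀def, LinearMap.coe_range]
      rfl
    rwa [h2] at h1
  haveI hMcomp : CompleteSpace M₀ := hMclosed.completeSpace_coe
  have hUinj : Function.Injective U := hanti.injective
  let e₀ : X ≃ₗ[ℂ] M₀ := LinearEquiv.ofInjective ULM hUinj
  have he₀cont : Continuous e₀ := by
    apply Continuous.subtype_mk
    exact hUcont
  let uhat : X ≃L[ℂ] M₀ := e₀.toContinuousLinearEquivOfContinuous he₀cont
  have huhatcoe : ∀ g : X, ((uhat g : M₀) : X) = U g := fun g => rfl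
  have hUsymm : ∀ m : M₀, U (uhat.symm m) = (m : X) := by
    intro m
    have h1 := huhatcoe (uhat.symm m)
    rw [uhat.apply_symm_apply] at h1
    exact h1.symm
  -- the adjoint operator L
  let A : M₀ →L[ℂ] X := (uhat.symm : M₀ ≃L[ℂ] X).toContinuousLinearMap
  let L : X →L[ℂ] M₀ := ContinuousLinearMap.adjoint A
  have hAdef : ∀ m : M₀, A m = uhat.symm m := fun m => rfl
  have hLdef : ∀ (v : X) (m : M₀), (inner ℂ (L v) m : ℂ) = (inner ℂ v ((uhat.symm m : X)) : ℂ) := by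
    intro v m
    have := ContinuousLinearMap.adjoint_inner_left A m v
    rw [Submodule.coe_inner] at this
    rw [Submodule.coe_inner]
    exact this
  -- the fundamental pairing identity : a(m, v) = ⟪L v, m⟫ for m ∈ M₀
  have hpair : ∀ (m : M₀) (v : X), a (m : X) v = (inner ℂ (L v) m : ℂ) := by
    intro m v
    calc a (m : X) v = a (U (uhat.symm m)) v := by rw [hUsymm]
    _ = (inner ℂ v (uhat.symm m) : ℂ) := hU1 _ v
    _ = (inner ℂ (L v) m : ℂ) := (hLdef v m).symm
  -- the self-contained Aubin–Nitsche estimate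
  have hJ' : ∀ (x g : X), (∀ v, a x v = (inner ℂ v g : ℂ)) → (∀ vh ∈ Vh, a x vh = 0) →
      ‖J x‖ ≤ Cb * η * ‖x‖ := by
    intro x g hxg hxo
    have hgx : ‖g‖ ≤ Cb * ‖x‖ := by
      rcases eq_or_ne g 0 with rfl | hg
      · simp
        positivity
      · have h1 : ‖(inner ℂ g g : ℂ)‖ ≤ Cb * ‖x‖ * ‖g‖ := by
          rw [← hxg g]
          exact hbound x g
        have h2 : ‖(inner ℂ g g : ℂ)‖ = ‖g‖ * ‖g‖ := by
          rw [inner_self_eq_norm_sq_to_K, norm_pow]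
          simp [sq]
        rw [h2] at h1
        exact le_of_mul_le_mul_right h1 (norm_pos_iff.2 hg)
    rcases eq_or_ne (J x) 0 with hJx | hJx
    · rw [hJx]
      simp
      positivity
    · have hJpos : 0 < ‖J x‖ := norm_pos_iff.2 hJx
      have key : ∀ ε > (0:ℝ), ‖J x‖ ≤ (η + ε) * (Cb * ‖x‖) := by
        intro ε hε
        obtain ⟨vh, hvhm, hvh⟩ := happrox (J x) ε hε
        set f := J x with hf
        have h1 : (inner ℂ f f : ℂ) = conj (a x (w f)) := (hadjoint f x).symm
        have h2 : a x (w f) = (inner ℂ (w f) g : ℂ) := hxg (w f)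
        have h3 : (inner ℂ vh g : ℂ) = 0 := by
          rw [← hxg vh]
          exact hxo vh hvhm
        have h4 : (inner ℂ f f : ℂ) = conj (inner ℂ (w f - vh) g : ℂ) := by
          rw [h1, h2, inner_sub_left, h3, sub_zero]
        have h5 : ‖f‖ * ‖f‖ ≤ ‖w f - vh‖ * ‖g‖ := by
          have hn := congrArg norm h4
          rw [RCLike.norm_conj] at hn
          have hnorm : ‖(inner ℂ f f : ℂ)‖ = ‖f‖ * ‖f‖ := by
            rw [inner_self_eq_norm_sq_to_K, norm_pow]
            simp [sq]
          rw [hnorm] at hn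
          rw [hn]
          exact norm_inner_le_norm _ _
        have h6 : ‖f‖ * ‖f‖ ≤ ((η + ε) * (Cb * ‖x‖)) * ‖f‖ := by
          calc ‖f‖ * ‖f‖ ≤ ‖w f - vh‖ * ‖g‖ := h5
          _ ≤ ((η + ε) * ‖f‖) * (Cb * ‖x‖) := by
            apply mul_le_mul hvh hgx (norm_nonneg _)
            positivity
          _ = ((η + ε) * (Cb * ‖x‖)) * ‖f‖ := by ring
        exact le_of_mul_le_mul_right h6 hJpos
      have hx0 : x ≠ 0 := by
        intro hh
        apply hJx
        rw [hh]
        simp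
      have hxn : (0:ℝ) < ‖x‖ := norm_pos_iff.2 hx0
      have hfin : ∀ δ > (0:ℝ), ‖J x‖ ≤ Cb * η * ‖x‖ + δ := by
        intro δ hδ
        have hε : (0:ℝ) < δ / (Cb * ‖x‖) := by positivity
        calc ‖J x‖ ≤ (η + δ / (Cb * ‖x‖)) * (Cb * ‖x‖) := key _ hε
        _ = Cb * η * ‖x‖ + δ := by
          field_simp
      exact le_of_forall_pos_le_add hfin
  -- the finite-dimensional subspace F₀ = L(Vh) of M₀
  let LV : ↥Vh →L[ℂ] M₀ := L.comp Vh.subtypeL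
  let F₀ : Submodule ℂ M₀ := LinearMap.range (LV.toLinearMap)
  haveI hF₀fd : FiniteDimensional ℂ F₀ := LinearMap.finiteDimensional_range _
  let P : M₀ →L[ℂ] F₀ := Submodule.orthogonalProjectionOnto F₀
  -- elements of M₀ orthogonal to F₀ satisfy the discrete orthogonality, hence the J-estimate
  have hWJ : ∀ m : M₀, m ∈ F₀ᗮ → ‖J (m : X)‖ ≤ Cb * η * ‖(m : X)‖ := by
    intro m hm
    refine hJ' (m : X) (uhat.symm m) (fun v => by rw [hpair m v, hLdef]) ?_
    intro vh hvh
    rw [hpair m vh]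
    have hLm : L vh ∈ F₀ := by
      have : LV ⟨vh, hvh⟩ = L vh := rfl
      rw [← this]
      exact LinearMap.mem_range_self _ _
    exact Submodule.inner_right_of_mem_orthogonal hLm hm
  -- the operator T on M₀ and its Gårding inequality
  let T : M₀ →L[ℂ] M₀ := L.comp M₀.subtypeL
  have hTpair : ∀ m m' : M₀, a (m : X) (m' : X) = (inner ℂ (T m') m : ℂ) :=
    fun m m' => hpair m (m' : X)
  have hgard : ∀ m : M₀, α * ‖m‖ ^ 2 - β * ‖J (m : X)‖ ^ 2 ≤ (inner ℂ (T m) m : ℂ).re := by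
    intro m
    have h1 := hgarding (m : X)
    rw [hTpair m m] at h1
    simpa [Submodule.coe_norm] using h1
  -- the finite-rank correction making T coercive
  set Cj : ℝ := ‖J‖ with hCjdef
  have hCj : 0 ≤ Cj := norm_nonneg _
  set v₀ : ℝ := β * Cb * η * Cj with hv₀def
  have hv₀ : 0 ≤ v₀ := by positivity
  set c₅ : ℝ := 4 * v₀ ^ 2 / α + β * Cj ^ 2 + 1 with hc₅def
  let T₁ : M₀ →L[ℂ] M₀ := T + (c₅ : ℂ) • (F₀.subtypeL.comp P)
  have hcoer : ∀ m : M₀, (α / 4) * ‖m‖ ^ 2 ≤ (inner ℂ (T₁ m) m : ℂ).re := by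
    intro m
    set p : ℝ := ‖((P m : F₀) : M₀)‖ with hpdef
    set wv : M₀ := m - ((P m : F₀) : M₀) with hwvdef
    have hworth : wv ∈ F₀ᗮ := Submodule.sub_starProjection_mem_orthogonal (K := F₀) m
    have hPm : ((P m : F₀) : M₀) ∈ F₀ := SetLike.coe_mem _
    have hPwv : (inner ℂ ((P m : F₀) : M₀) wv : ℂ) = 0 :=
      Submodule.inner_right_of_mem_orthogonal hPm hworth
    have hdecomp : ((P m : F₀) : M₀) + wv = m := by
      rw [hwvdef]
      abel
    have hpyth : ‖m‖ ^ 2 = p ^ 2 + ‖wv‖ ^ 2 := by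
      rw [← hdecomp, @norm_add_sq ℂ _ _ _ _ _, hPwv]
      simp only [map_zero, Complex.zero_re, mul_zero, add_zero, zero_mul]
      rw [hpdef]
    have hwle : ‖wv‖ ≤ ‖m‖ := by nlinarith [sq_nonneg p, norm_nonneg wv, norm_nonneg m]
    have hple : p ≤ ‖m‖ := by nlinarith [sq_nonneg ‖wv‖, norm_nonneg m, hpdef ▸ norm_nonneg ((P m : F₀) : M₀)]
    have hJw : ‖J (wv : X)‖ ≤ Cb * η * ‖m‖ := by
      refine (hWJ wv hworth).trans ?_
      have : ‖(wv : X)‖ = ‖wv‖ := by rw [Submodule.coe_norm]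
      rw [this]
      have h0 : 0 ≤ Cb * η := by positivity
      exact mul_le_mul_of_nonneg_left hwle h0
    have hJP : ‖J (((P m : F₀) : M₀) : X)‖ ≤ Cj * p := by
      have h1 := J.le_opNorm ((((P m : F₀) : M₀) : X))
      rw [Submodule.norm_coe] at h1
      exact h1
    have hJm : ‖J (m : X)‖ ≤ Cb * η * ‖m‖ + Cj * p := by
      have h1 : (m : X) = (wv : X) + (((P m : F₀) : M₀) : X) := by
        have h1a := congrArg (fun z : M₀ => (z : X)) hdecomp
        push_cast at h1a
        rw [← h1a]
        abel
      rw [h1, map_add]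
      exact (norm_add_le _ _).trans (add_le_add hJw hJP)
    -- the inner product against the correction term
    have hip : (inner ℂ (T₁ m) m : ℂ).re = (inner ℂ (T m) m : ℂ).re + c₅ * p ^ 2 := by
      have h1 : T₁ m = T m + (c₅ : ℂ) • ((P m : F₀) : M₀) := rfl
      rw [h1, inner_add_left, inner_smul_left]
      have h2 : (inner ℂ ((P m : F₀) : M₀) m : ℂ) = ((p : ℂ)) ^ 2 := by
        have h2a : (inner ℂ ((P m : F₀) : M₀) m : ℂ)
            = (inner ℂ ((P m : F₀) : M₀) (((P m : F₀) : M₀) + wv) : ℂ) := by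
          rw [hdecomp]
        rw [h2a, inner_add_right, hPwv, add_zero, inner_self_eq_norm_sq_to_K, hpdef]
        norm_cast
      rw [h2]
      have h3 : (starRingEnd ℂ) ((c₅ : ℝ) : ℂ) = ((c₅ : ℝ) : ℂ) := Complex.conj_ofReal _
      rw [h3]
      have h4 : (((c₅:ℝ) : ℂ) * ((p:ℝ) : ℂ) ^ 2) = (((c₅ * p ^ 2 : ℝ)) : ℂ) := by
        push_cast
        ring
      rw [h4, Complex.add_re, Complex.ofReal_re]
    rw [hip]
    -- now pure real arithmetic
    have hβJ : β * ‖J (m : X)‖ ^ 2 ≤ β * (Cb * η * ‖m‖ + Cj * p) ^ 2 := by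
      apply mul_le_mul_of_nonneg_left _ hβ
      have h0 : 0 ≤ ‖J (m : X)‖ := norm_nonneg _
      nlinarith [hJm]
    have hsmall' : β * Cb ^ 2 * η ^ 2 * ‖m‖ ^ 2 ≤ (α / 2) * ‖m‖ ^ 2 :=
      mul_le_mul_of_nonneg_right hsmall (sq_nonneg _)
    have hamgm : 2 * v₀ * ‖m‖ * p ≤ (α / 4) * ‖m‖ ^ 2 + 4 * v₀ ^ 2 / α * p ^ 2 := by
      have h1 : (α / 4) * ‖m‖ ^ 2 + 4 * v₀ ^ 2 / α * p ^ 2 - 2 * v₀ * ‖m‖ * p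
          = (α * ‖m‖ - 4 * v₀ * p) ^ 2 / (4 * α) := by
        field_simp
        ring
      nlinarith [sq_nonneg (α * ‖m‖ - 4 * v₀ * p), div_nonneg (sq_nonneg (α * ‖m‖ - 4 * v₀ * p)) (by positivity : (0:ℝ) ≤ 4 * α)]
    have hc₅p : (4 * v₀ ^ 2 / α + β * Cj ^ 2) * p ^ 2 ≤ c₅ * p ^ 2 := by
      have : (4 * v₀ ^ 2 / α + β * Cj ^ 2) ≤ c₅ := by
        rw [hc₅def]
        linarith
      exact mul_le_mul_of_nonneg_right this (sq_nonneg _)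
    have hexp : β * (Cb * η * ‖m‖ + Cj * p) ^ 2
        = β * Cb ^ 2 * η ^ 2 * ‖m‖ ^ 2 + 2 * v₀ * ‖m‖ * p + β * Cj ^ 2 * p ^ 2 := by
      rw [hv₀def]
      ring
    have hg := hgard m
    nlinarith [hβJ, hsmall', hamgm, hc₅p, hexp, hg]
  -- T₁ is bijective, so T is a finite-rank perturbation of a bijection
  have hbij : Function.Bijective T₁ := schatz_coercive_bij T₁ (by positivity) hcoer
  let e₁ : M₀ ≃ₗ[ℂ] M₀ := LinearEquiv.ofBijective T₁.toLinearMap hbij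
  have he₁ : ∀ m : M₀, e₁ m = T₁ m := fun m => rfl
  let G : F₀ →ₗ[ℂ] M₀ := e₁.symm.toLinearMap.comp (((c₅ : ℂ) • F₀.subtypeL).toLinearMap)
  let Pl : M₀ →ₗ[ℂ] F₀ := P.toLinearMap
  let Klin : M₀ →ₗ[ℂ] M₀ := G.comp Pl
  have hT₁K : ∀ m : M₀, T₁ (Klin m) = (c₅ : ℂ) • ((P m : F₀) : M₀) := by
    intro m
    have h1 : Klin m = e₁.symm ((c₅ : ℂ) • ((P m : F₀) : M₀)) := rfl
    rw [h1, ← he₁ (e₁.symm _), e₁.apply_symm_apply]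
  have hfac : ∀ m : M₀, T₁ (m - Klin m) = T m := by
    intro m
    rw [map_sub, hT₁K]
    show T m + (c₅ : ℂ) • ((P m : F₀) : M₀) - (c₅ : ℂ) • ((P m : F₀) : M₀) = T m
    abel
  -- L is injective
  have hLinj : ∀ x y : X, L x = L y → x = y := by
    intro x y h
    have h1 : (inner ℂ (x - y) (x - y) : ℂ) = 0 := by
      have h2 : (inner ℂ (L x) (uhat (x - y)) : ℂ) = (inner ℂ (L y) (uhat (x - y)) : ℂ) := by rw [h]
      rw [hLdef, hLdef, uhat.symm_apply_apply] at h2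
      rw [inner_sub_left, h2, sub_self]
    rw [inner_self_eq_zero, sub_eq_zero] at h1
    exact h1
  have hTinj : Function.Injective T := by
    intro m m' h
    exact Subtype.ext (hLinj _ _ h)
  have hIKinj : Function.Injective (LinearMap.id (R := ℂ) (M := M₀) - Klin) := by
    intro m m' h
    apply hTinj
    rw [← hfac m, ← hfac m']
    have h' : m - Klin m = m' - Klin m' := by simpa using h
    rw [h']
  haveI hFD : FiniteDimensional ℂ (LinearMap.range Klin) := by
    have hle : LinearMap.range Klin ≤ LinearMap.range G := LinearMap.range_comp_le_range Pl G
    exact Submodule.finiteDimensional_of_le hle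
  have hIKsurj := schatz_fredholm_aux Klin hFD hIKinj
  have hTsurj : Function.Surjective T := by
    intro y
    obtain ⟨m, hm⟩ := hIKsurj (e₁.symm y)
    refine ⟨m, ?_⟩
    have h1 : m - Klin m = e₁.symm y := by simpa using hm
    rw [← hfac m, h1, ← he₁ (e₁.symm y), e₁.apply_symm_apply]
  -- conclusion : M₀ is everything
  have hMtop : ∀ x : X, x ∈ M₀ := by
    intro x
    obtain ⟨m, hm⟩ := hTsurj (L x)
    have h1 : (m : X) = x := hLinj _ _ hm
    rw [← h1]
    exact m.2
  -- canonical representation : a x v = ⟪v, g x⟫ for every x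
  let incl' : X →ₗ[ℂ] M₀ := LinearMap.codRestrict M₀ LinearMap.id hMtop
  have hgsol : ∀ x : X, U (uhat.symm (incl' x)) = x := fun x => hUsymm (incl' x)
  have hax : ∀ (x v : X), a x v = (inner ℂ v ((uhat.symm (incl' x) : X)) : ℂ) := by
    intro x v
    calc a x v = a (U (uhat.symm (incl' x))) v := by rw [hgsol]
    _ = _ := hU1 _ v
  -- uniqueness for the homogeneous discrete problem (Schatz argument)
  have hdisc0 : ∀ e : ↥Vh, (∀ vh : ↥Vh, a (e : X) (vh : X) = 0) → e = 0 := by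
    intro e he
    have hJe : ‖J (e : X)‖ ≤ Cb * η * ‖(e : X)‖ :=
      hJ' (e : X) (uhat.symm (incl' (e : X))) (hax _) (fun vh hvh => he ⟨vh, hvh⟩)
    have haee : a (e : X) (e : X) = 0 := he e
    have hg := hgarding (e : X)
    rw [haee] at hg
    simp only [Complex.zero_re] at hg
    have h1 : β * ‖J (e : X)‖ ^ 2 ≤ β * (Cb * η * ‖(e : X)‖) ^ 2 := by
      apply mul_le_mul_of_nonneg_left _ hβ
      nlinarith [norm_nonneg (J (e : X)), hJe]
    have h2 : β * (Cb * η * ‖(e : X)‖) ^ 2 ≤ (α / 2) * ‖(e : X)‖ ^ 2 := by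
      calc β * (Cb * η * ‖(e : X)‖) ^ 2 = (β * Cb ^ 2 * η ^ 2) * ‖(e : X)‖ ^ 2 := by ring
      _ ≤ (α / 2) * ‖(e : X)‖ ^ 2 := mul_le_mul_of_nonneg_right hsmall (sq_nonneg _)
    have h3 : ‖(e : X)‖ ^ 2 ≤ 0 := by nlinarith
    have h4 : ‖(e : X)‖ = 0 := by nlinarith [sq_nonneg ‖(e : X)‖, norm_nonneg (e : X)]
    exact Subtype.ext (norm_eq_zero.1 h4)
  intro ℓ
  -- the Riesz representative of ℓ
  let φ : X →L[ℂ] ℂ := LinearMap.mkContinuous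
    { toFun := fun v => conj (ℓ v)
      map_add' := fun x y => by
        show conj (ℓ (x + y)) = conj (ℓ x) + conj (ℓ y)
        rw [map_add, map_add]
      map_smul' := fun c x => by
        simp only [ContinuousLinearMap.map_smulₛₗ, smul_eq_mul, map_mul, Complex.conj_conj,
          RingHom.id_apply] }
    ‖ℓ‖ (fun v => by
      show ‖conj (ℓ v)‖ ≤ ‖ℓ‖ * ‖v‖
      rw [RCLike.norm_conj]
      exact ℓ.le_opNorm v)
  let r : X := (InnerProductSpace.toDual ℂ X).symm φ
  have hr : ∀ v : X, ℓ v = (inner ℂ v r : ℂ) := by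
    intro v
    have h1 : (InnerProductSpace.toDual ℂ X) r = φ := LinearIsometryEquiv.apply_symm_apply _ _
    have h2 : (inner ℂ r v : ℂ) = φ v := by
      rw [← InnerProductSpace.toDual_apply_apply, h1]
    have h3 := congrArg conj h2
    rw [inner_conj_symm] at h3
    rw [h3]
    show ℓ v = conj (conj (ℓ v))
    rw [Complex.conj_conj]
  -- the finite-dimensional square system
  haveI : CompleteSpace ↥Vh := FiniteDimensional.complete ℂ ↥Vh
  let PV : X →L[ℂ] ↥Vh := Submodule.orthogonalProjectionOnto Vh
  let Φ : ↥Vh →ₗ[ℂ] ↥Vh := PV.toLinearMap.comp (A.toLinearMap.comp (incl'.comp Vh.subtype))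
  have hΦinj : Function.Injective Φ := by
    intro uh uh' hh
    have hd0 : Φ (uh - uh') = 0 := by rw [map_sub, hh, sub_self]
    have hmem : ((uhat.symm (incl' ((uh - uh' : ↥Vh) : X)) : X)) ∈ Vhᗮ := by
      rw [← Submodule.orthogonalProjectionOnto_eq_zero_iff (K := Vh)]
      exact hd0
    have hz : ∀ vh : ↥Vh, a ((uh - uh' : ↥Vh) : X) (vh : X) = 0 := by
      intro vh
      rw [hax]
      exact Submodule.inner_right_of_mem_orthogonal vh.2 hmem
    exact sub_eq_zero.1 (hdisc0 _ hz)
  have hΦsurj : Function.Surjective Φ := LinearMap.injective_iff_surjective.1 hΦinj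
  obtain ⟨uh, huh⟩ := hΦsurj (PV r)
  have hsol : ∀ vh : ↥Vh, a (uh : X) (vh : X) = ℓ (vh : X) := by
    intro vh
    have hmem : ((uhat.symm (incl' (uh : X)) : X)) - r ∈ Vhᗮ := by
      rw [← Submodule.orthogonalProjectionOnto_eq_zero_iff (K := Vh)]
      rw [map_sub]
      have h1 : Submodule.orthogonalProjectionOnto Vh ((uhat.symm (incl' (uh : X)) : X)) = Φ uh := rfl
      rw [h1, huh]
      exact sub_self _
    rw [hax, hr]
    have h2 := Submodule.inner_right_of_mem_orthogonal vh.2 hmem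
    rw [inner_sub_right] at h2
    linear_combination h2
  refine ⟨uh, hsol, ?_⟩
  intro uh' huh'
  have hz : ∀ vh : ↥Vh, a ((uh' - uh : ↥Vh) : X) (vh : X) = 0 := by
    intro vh
    have hc : ((uh' - uh : ↥Vh) : X) = (uh' : X) - (uh : X) := rfl
    rw [hc, hsub, huh' vh, hsol vh, sub_self]
  exact sub_eq_zero.1 (hdisc0 _ hz)
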